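/- For a, a', b > 0, the normalizing constant of the real beta-hypergeometric distribution is symmetric in (a, a'): ₃F₂(a,a,b;a+b,a+a';1)/(Γ(a')Γ(a+b)) = ₃F₂(a',a',b;a'+b,a+a';1)/(Γ(a)Γ(a'+b)). -/

import Mathlib

open MeasureTheory ProbabilityTheory Real Set Filter Topology

noncomputable def gammaDens (p σ y : ℝ) : ℝ :=
  if 0 < y then σ ^ p / Real.Gamma p * Real.exp (-(σ * y)) * y ^ (p - 1) else 0

noncomputable def gammaM (p σ : ℝ) : Measure ℝ :=
  MeasureTheory.volume.withDensity fun y => ENNReal.ofReal (gammaDens p σ y)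

noncomputable def beta1Dens (p q x : ℝ) : ℝ :=
  if 0 < x ∧ x < 1 then
    Real.Gamma (p + q) / (Real.Gamma p * Real.Gamma q) * x ^ (p - 1) * (1 - x) ^ (q - 1)
  else 0

noncomputable def beta1 (p q : ℝ) : Measure ℝ :=
  MeasureTheory.volume.withDensity fun x => ENNReal.ofReal (beta1Dens p q x)

noncomputable def beta2Dens (p q y : ℝ) : ℝ :=
  if 0 < y then
    Real.Gamma (p + q) / (Real.Gamma p * Real.Gamma q) * y ^ (p - 1) * (1 + y) ^ (-(p + q))
  else 0

noncomputable def beta2 (p q : ℝ) : Measure ℝ :=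
  MeasureTheory.volume.withDensity fun y => ENNReal.ofReal (beta2Dens p q y)

/-- Pochhammer (rising factorial) symbol `(a)_n`. -/
noncomputable def poch (a : ℝ) (n : ℕ) : ℝ := ∏ i ∈ Finset.range n, (a + (i : ℝ))

/-- Gauss hypergeometric function `₂F₁(a,b;c;x)`. -/
noncomputable def F21 (a b c x : ℝ) : ℝ :=
  ∑' n : ℕ, poch a n * poch b n / ((n.factorial : ℝ) * poch c n) * x ^ n

/-- Generalized hypergeometric `₃F₂(a₁,a₂,a₃;b₁,b₂;1)` at unit argument. -/
noncomputable def F32one (a1 a2 a3 b1 b2 : ℝ) : ℝ :=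
  ∑' n : ℕ, poch a1 n * poch a2 n * poch a3 n /
    ((n.factorial : ℝ) * poch b1 n * poch b2 n)

/-- Normalizing constant of the real beta-hypergeometric distribution. -/
noncomputable def Cbh (a a' b : ℝ) : ℝ :=
  Real.Gamma (a + b) / (Real.Gamma a * Real.Gamma b * F32one a a b (a + b) (a + a'))

noncomputable def bhDens (a a' b x : ℝ) : ℝ :=
  if 0 < x ∧ x < 1 then
    Cbh a a' b * x ^ (a - 1) * (1 - x) ^ (b - 1) * F21 a b (a + a') x
  else 0

/-- The real beta-hypergeometric distribution `μ_{a,a',b}`. -/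
noncomputable def bhMeasure (a a' b : ℝ) : Measure ℝ :=
  MeasureTheory.volume.withDensity fun x => ENNReal.ofReal (bhDens a a' b x)


section Aux
open MeasureTheory Real Set


lemma poch_pos {a : ℝ} (ha : 0 < a) (n : ℕ) : 0 < poch a n :=
  Finset.prod_pos fun i _ => by positivity

lemma poch_succ (a : ℝ) (n : ℕ) : poch a (n + 1) = poch a n * (a + n) :=
  Finset.prod_range_succ _ _

lemma Gamma_add_nat {a : ℝ} (ha : 0 < a) (n : ℕ) :
    Real.Gamma (a + n) = poch a n * Real.Gamma a := by
  induction n with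
  | zero => simp [poch]
  | succ n ih =>
    have h1 : a + (n + 1 : ℕ) = (a + n) + 1 := by push_cast; ring
    rw [h1, Real.Gamma_add_one (by positivity), ih, poch_succ]; ring

/-- ENNReal binomial series. -/
lemma binom_tsum {b y : ℝ} (hb : 0 < b) (hy0 : 0 ≤ y) (hy1 : y < 1) :
    ∑' n : ℕ, ENNReal.ofReal (poch b n / (n.factorial : ℝ) * y ^ n)
      = ENNReal.ofReal ((1 - y) ^ (-b)) := by
  have h1y : 0 < 1 - y := by linarith
  -- Gamma integral representation
  have key : (1 - y) ^ (-b) * Real.Gamma b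
      = ∫ t in Ioi (0:ℝ), t ^ (b - 1) * rexp (-((1 - y) * t)) := by
    rw [integral_rpow_mul_exp_neg_mul_Ioi hb h1y]
    rw [Real.rpow_neg h1y.le, ← Real.inv_rpow h1y.le, one_div]
  have hint : IntegrableOn (fun t : ℝ => t ^ (b - 1) * rexp (-((1 - y) * t))) (Ioi 0) := by
    have := integrableOn_rpow_mul_exp_neg_mul_rpow (p := 1) (s := b - 1) (b := 1 - y)
      (by linarith) one_pos h1y
    have he : ∀ t : ℝ, -(1 - y) * t ^ (1:ℝ) = -((1 - y) * t) := by
      intro t; rw [Real.rpow_one]; ring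
    simpa only [he] using this
  have hGpos := Real.Gamma_pos_of_pos hb
  -- exp series
  have hexp : ∀ t : ℝ, 0 < t → t ^ (b - 1) * rexp (-((1 - y) * t))
      = ∑' n : ℕ, y ^ n / (n.factorial : ℝ) * (t ^ (b + n - 1) * rexp (-t)) := by
    intro t ht
    have h1 : rexp (-((1 - y) * t)) = rexp (-t) * rexp (y * t) := by
      rw [← Real.exp_add]; ring_nf
    have h2 : rexp (y * t) = ∑' n : ℕ, (y * t) ^ n / (n.factorial : ℝ) := by
      rw [Real.exp_eq_exp_ℝ, NormedSpace.exp_eq_tsum_div]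
    rw [h1, h2, ← mul_assoc, ← tsum_mul_left]
    refine tsum_congr fun n => ?_
    have h3 : t ^ (b + n - 1) = t ^ (b - 1) * t ^ n := by
      rw [← Real.rpow_natCast t n, ← Real.rpow_add ht]; ring_nf
    rw [h3, mul_pow]; ring
  -- summability of the series pointwise
  have hsumm : ∀ t : ℝ, 0 < t → Summable fun n : ℕ => y ^ n / (n.factorial : ℝ) * (t ^ (b + n - 1) * rexp (-t)) := by
    intro t ht
    have h0 : Summable fun n : ℕ => (t ^ (b - 1) * rexp (-t)) * ((y * t) ^ n / (n.factorial : ℝ)) :=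
      (Real.summable_pow_div_factorial (y * t)).mul_left _
    refine h0.congr fun n => ?_
    have h3 : t ^ (b + n - 1) = t ^ (b - 1) * t ^ n := by
      rw [← Real.rpow_natCast t n, ← Real.rpow_add ht]; ring_nf
    rw [h3, mul_pow]; ring
  have hmeas : ∀ n : ℕ, Measurable fun t : ℝ =>
      ENNReal.ofReal (y ^ n / (n.factorial : ℝ) * (t ^ (b + n - 1) * rexp (-t))) := by
    intro n
    fun_prop
  have hint2 : ∀ n : ℕ, IntegrableOn (fun t : ℝ => t ^ (b + n - 1) * rexp (-t)) (Ioi 0) := by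
    intro n
    have := integrableOn_rpow_mul_exp_neg_mul_rpow (p := 1) (s := b + n - 1) (b := 1)
      (by have : (0:ℝ) ≤ n := Nat.cast_nonneg n; linarith) one_pos one_pos
    refine this.congr_fun (fun t ht => ?_) measurableSet_Ioi
    simp only [Real.rpow_one]; ring_nf
  have hval : ∀ n : ℕ, ∫⁻ t in Ioi (0:ℝ), ENNReal.ofReal (t ^ (b + n - 1) * rexp (-t))
      = ENNReal.ofReal (Real.Gamma (b + n)) := by
    intro n
    rw [← ofReal_integral_eq_lintegral_ofReal (hint2 n)]
    · congr 1
      have := integral_rpow_mul_exp_neg_mul_Ioi (a := b + n) (r := 1) (by positivity) one_pos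
      simp only [one_mul, Real.one_rpow, one_div, inv_one] at this
      rw [← this]
    · filter_upwards [ae_restrict_mem measurableSet_Ioi] with t ht
      have : (0:ℝ) < t := ht
      positivity
  -- main computation
  have main : ENNReal.ofReal ((1 - y) ^ (-b)) * ENNReal.ofReal (Real.Gamma b)
      = (∑' n : ℕ, ENNReal.ofReal (poch b n / (n.factorial : ℝ) * y ^ n)) * ENNReal.ofReal (Real.Gamma b) := by
    rw [← ENNReal.ofReal_mul (by positivity), key,
      ofReal_integral_eq_lintegral_ofReal hint ?nn]
    case nn =>
      filter_upwards [ae_restrict_mem measurableSet_Ioi] with t ht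
      have : (0:ℝ) < t := ht
      positivity
    have step1 : ∫⁻ t in Ioi (0:ℝ), ENNReal.ofReal (t ^ (b - 1) * rexp (-((1 - y) * t)))
        = ∫⁻ t in Ioi (0:ℝ), ∑' n : ℕ,
          ENNReal.ofReal (y ^ n / (n.factorial : ℝ) * (t ^ (b + n - 1) * rexp (-t))) := by
      refine setLIntegral_congr_fun measurableSet_Ioi (fun t ht => ?_)
      have ht : (0:ℝ) < t := ht
      rw [hexp t ht, ENNReal.ofReal_tsum_of_nonneg (fun n => by positivity) (hsumm t ht)]
    rw [step1, lintegral_tsum (fun n => (hmeas n).aemeasurable), ← ENNReal.tsum_mul_right]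
    refine tsum_congr fun n => ?_
    have : ∀ t : ℝ, ENNReal.ofReal (y ^ n / (n.factorial : ℝ) * (t ^ (b + n - 1) * rexp (-t)))
        = ENNReal.ofReal (y ^ n / (n.factorial : ℝ)) * ENNReal.ofReal (t ^ (b + n - 1) * rexp (-t)) := by
      intro t; rw [← ENNReal.ofReal_mul (by positivity)]
    simp_rw [this]
    rw [lintegral_const_mul _ (by fun_prop : Measurable fun t : ℝ =>
      ENNReal.ofReal (t ^ (b + n - 1) * rexp (-t))), hval n,
      Gamma_add_nat hb n, ← ENNReal.ofReal_mul (by positivity), ← ENNReal.ofReal_mul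
        (mul_nonneg (div_nonneg (poch_pos hb n).le (by positivity)) (by positivity))]
    congr 1
    field_simp
  have hne : ENNReal.ofReal (Real.Gamma b) ≠ 0 := by
    simp [ENNReal.ofReal_eq_zero, not_le, hGpos]
  have hnt : ENNReal.ofReal (Real.Gamma b) ≠ ⊤ := ENNReal.ofReal_ne_top
  exact ((ENNReal.mul_left_inj hne hnt).mp main).symm


lemma beta_integrableOn {p q : ℝ} (hp : 0 < p) (hq : 0 < q) :
    IntegrableOn (fun x : ℝ => x ^ (p - 1) * (1 - x) ^ (q - 1)) (Ioo 0 1) := by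
  have h1 : IntervalIntegrable
      (fun x : ℝ => (x : ℂ) ^ ((p : ℂ) - 1) * ((1 : ℂ) - (x : ℂ)) ^ ((q : ℂ) - 1))
      volume 0 1 := Complex.betaIntegral_convergent (by simpa) (by simpa)
  have hIoo : IntegrableOn
      (fun x : ℝ => (x : ℂ) ^ ((p : ℂ) - 1) * ((1 : ℂ) - (x : ℂ)) ^ ((q : ℂ) - 1))
      (Ioo 0 1) := by
    have := (intervalIntegrable_iff_integrableOn_Ioc_of_le zero_le_one).mp h1
    exact this.mono_set Ioo_subset_Ioc_self
  have hEq : EqOn (fun x : ℝ => (x : ℂ) ^ ((p : ℂ) - 1) * ((1 : ℂ) - (x : ℂ)) ^ ((q : ℂ) - 1))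
      (fun x : ℝ => ((x ^ (p - 1) * (1 - x) ^ (q - 1) : ℝ) : ℂ)) (Ioo 0 1) := by
    intro x hx
    have h2 : ((x ^ (p-1) : ℝ) : ℂ) = (x : ℂ) ^ ((p : ℂ) - 1) := by
      rw [Complex.ofReal_cpow hx.1.le]; push_cast; ring_nf
    have h3 : (((1 - x) ^ (q-1) : ℝ) : ℂ) = ((1:ℂ) - (x:ℂ)) ^ ((q : ℂ) - 1) := by
      rw [Complex.ofReal_cpow (by linarith [hx.2] : (0:ℝ) ≤ 1 - x)]; push_cast; ring_nf
    simp only [← h2, ← h3]; push_cast; ring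
  have h2 : IntegrableOn (fun x : ℝ => ((x ^ (p - 1) * (1 - x) ^ (q - 1) : ℝ) : ℂ)) (Ioo 0 1) :=
    hIoo.congr_fun hEq measurableSet_Ioo
  have h3 : Integrable (fun x : ℝ => x ^ (p - 1) * (1 - x) ^ (q - 1)) (volume.restrict (Ioo 0 1)) := by
    simpa using h2.re
  exact h3

lemma beta_integral {p q : ℝ} (hp : 0 < p) (hq : 0 < q) :
    ∫ x in Ioo (0:ℝ) 1, x ^ (p - 1) * (1 - x) ^ (q - 1)
      = Real.Gamma p * Real.Gamma q / Real.Gamma (p + q) := by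
  have hEq : EqOn (fun x : ℝ => (x : ℂ) ^ ((p : ℂ) - 1) * ((1 : ℂ) - (x : ℂ)) ^ ((q : ℂ) - 1))
      (fun x : ℝ => ((x ^ (p - 1) * (1 - x) ^ (q - 1) : ℝ) : ℂ)) (Ioo 0 1) := by
    intro x hx
    have h2 : ((x ^ (p-1) : ℝ) : ℂ) = (x : ℂ) ^ ((p : ℂ) - 1) := by
      rw [Complex.ofReal_cpow hx.1.le]; push_cast; ring_nf
    have h3 : (((1 - x) ^ (q-1) : ℝ) : ℂ) = ((1:ℂ) - (x:ℂ)) ^ ((q : ℂ) - 1) := by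
      rw [Complex.ofReal_cpow (by linarith [hx.2] : (0:ℝ) ≤ 1 - x)]; push_cast; ring_nf
    simp only [← h2, ← h3]; push_cast; ring
  have hβ : Complex.betaIntegral p q
      = ((Real.Gamma p * Real.Gamma q / Real.Gamma (p + q) : ℝ) : ℂ) := by
    have hG : Complex.Gamma ((p:ℂ) + q) ≠ 0 := by
      have : ((p:ℂ) + q) = ((p + q : ℝ) : ℂ) := by push_cast; ring
      rw [this, Complex.Gamma_ofReal]
      exact_mod_cast (Real.Gamma_pos_of_pos (by linarith)).ne'
    have := Complex.Gamma_mul_Gamma_eq_betaIntegral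
      (s := (p:ℂ)) (t := (q:ℂ)) (by simpa) (by simpa)
    have hval : Complex.betaIntegral p q
        = Complex.Gamma p * Complex.Gamma q / Complex.Gamma ((p:ℂ) + q) := by
      rw [eq_div_iff hG]
      linear_combination -this
    rw [hval]
    have hpq : ((p:ℂ) + q) = ((p + q : ℝ) : ℂ) := by push_cast; ring
    rw [hpq, Complex.Gamma_ofReal, Complex.Gamma_ofReal, Complex.Gamma_ofReal]
    push_cast
    ring
  have hchain : ((∫ x in Ioo (0:ℝ) 1, x ^ (p - 1) * (1 - x) ^ (q - 1) : ℝ) : ℂ)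
      = Complex.betaIntegral p q := by
    have h0 : ((∫ x in Ioo (0:ℝ) 1, x ^ (p - 1) * (1 - x) ^ (q - 1) : ℝ) : ℂ)
        = ∫ x in Ioo (0:ℝ) 1, ((x ^ (p - 1) * (1 - x) ^ (q - 1) : ℝ) : ℂ) :=
      (integral_ofReal (𝕜 := ℂ)).symm
    rw [h0, ← setIntegral_congr_fun measurableSet_Ioo hEq,
      ← MeasureTheory.integral_Ioc_eq_integral_Ioo,
      ← intervalIntegral.integral_of_le zero_le_one]
    rfl
  exact_mod_cast hchain.trans hβ

lemma betaL {p q : ℝ} (hp : 0 < p) (hq : 0 < q) :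
    ∫⁻ x in Ioo (0:ℝ) 1, ENNReal.ofReal (x ^ (p - 1) * (1 - x) ^ (q - 1))
      = ENNReal.ofReal (Real.Gamma p * Real.Gamma q / Real.Gamma (p + q)) := by
  rw [← beta_integral hp hq,
    ofReal_integral_eq_lintegral_ofReal (beta_integrableOn hp hq) ?_]
  filter_upwards [ae_restrict_mem measurableSet_Ioo] with x hx
  have h1 : (0:ℝ) ≤ x := hx.1.le
  have h2 : (0:ℝ) ≤ 1 - x := by linarith [hx.2]
  positivity


lemma lintegral_Ioo_affine {c d P Q : ℝ} (hc : 0 < c) (f : ℝ → ENNReal) (hf : Measurable f) :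
    ∫⁻ x in Ioo (c * P + d) (c * Q + d), f x
      = ENNReal.ofReal c * ∫⁻ s in Ioo P Q, f (c * s + d) := by
  have hφ : Measurable fun s : ℝ => c * s + d := (measurable_const_mul c).add_const d
  have hmap : Measure.map (fun s : ℝ => c * s + d) volume = ENNReal.ofReal c⁻¹ • volume := by
    have h1 : (fun s : ℝ => c * s + d) = (fun x : ℝ => x + d) ∘ (fun s : ℝ => c * s) := rfl
    rw [h1, ← Measure.map_map (measurable_add_const d) (measurable_const_mul c),
      Real.map_volume_mul_left hc.ne', Measure.map_smul,
      map_add_right_eq_self volume d, abs_of_pos (inv_pos.mpr hc)]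
  have hvol : (volume : Measure ℝ)
      = ENNReal.ofReal c • Measure.map (fun s : ℝ => c * s + d) volume := by
    rw [hmap, smul_smul, ← ENNReal.ofReal_mul hc.le, mul_inv_cancel₀ hc.ne',
      ENNReal.ofReal_one, one_smul]
  have hpre : (fun s : ℝ => c * s + d) ⁻¹' (Ioo (c * P + d) (c * Q + d)) = Ioo P Q := by
    ext s
    simp only [mem_preimage, mem_Ioo, add_lt_add_iff_right, mul_lt_mul_iff_right₀ hc]
  conv_lhs => rw [hvol]
  rw [Measure.restrict_smul, lintegral_smul_measure,
    Measure.restrict_map hφ measurableSet_Ioo, lintegral_map hf hφ, hpre, smul_eq_mul]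

lemma lintegral_Ioo01_reflect (f : ℝ → ENNReal) (hf : Measurable f) :
    ∫⁻ x in Ioo (0:ℝ) 1, f (1 - x) = ∫⁻ x in Ioo (0:ℝ) 1, f x := by
  have hmp : MeasurePreserving (fun x : ℝ => 1 - x) volume volume :=
    Measure.measurePreserving_sub_left volume 1
  have hpre : (fun x : ℝ => 1 - x) ⁻¹' (Ioo 0 1) = Ioo (0:ℝ) 1 := by
    ext x
    simp only [mem_preimage, mem_Ioo]
    constructor <;> (rintro ⟨h1, h2⟩; constructor <;> linarith)
  have h2 := hmp.restrict_preimage (s := Ioo (0:ℝ) 1) measurableSet_Ioo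
  rw [hpre] at h2
  exact h2.lintegral_comp hf

lemma substL {a a' b : ℝ} (ha : 0 < a) (ha' : 0 < a') (hb : 0 < b) :
    ∫⁻ t in Ioo (0:ℝ) 1, ∫⁻ x in Ioo (0:ℝ) 1,
      ENNReal.ofReal ((x ^ (a-1) * (1-x) ^ (b-1)) * (t ^ (a-1) * (1-t) ^ (a'-1))
        * (1 - x*t) ^ (-b))
    = ∫⁻ t in Ioo (0:ℝ) 1, ∫⁻ x in Ioo (0:ℝ) 1,
      ENNReal.ofReal ((x ^ (a'-1) * (1-x) ^ (b-1)) * (t ^ (a'-1) * (1-t) ^ (a-1))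
        * (1 - x*t) ^ (-b)) := by
  -- the triangular kernel
  set G : ℝ → ℝ → ℝ := fun u t =>
    t ^ (-b) * (1-t) ^ (a'-1) * u ^ (a-1) * (t-u) ^ (b-1) * (1-u) ^ (-b) with hG
  -- the symmetric kernel after second substitution
  set K : ℝ → ℝ → ℝ := fun u s =>
    u ^ (a-1) * (1-u) ^ (a'-1) * s ^ (b-1) * (1-s) ^ (a'-1)
      * (1 - (1-u)*(1-s)) ^ (-b) with hK
  -- Step 1 : substitution x = u / t in the inner integral
  have step1 : ∫⁻ t in Ioo (0:ℝ) 1, ∫⁻ x in Ioo (0:ℝ) 1,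
      ENNReal.ofReal ((x ^ (a-1) * (1-x) ^ (b-1)) * (t ^ (a-1) * (1-t) ^ (a'-1))
        * (1 - x*t) ^ (-b))
      = ∫⁻ t in Ioo (0:ℝ) 1, ∫⁻ u in Ioo 0 t, ENNReal.ofReal (G u t) := by
    refine setLIntegral_congr_fun measurableSet_Ioo (fun t ht => ?_)
    obtain ⟨ht0, ht1⟩ := ht
    have hIoo : Ioo (0:ℝ) 1 = Ioo (t⁻¹ * 0 + 0) (t⁻¹ * t + 0) := by
      rw [mul_zero, zero_add, add_zero, inv_mul_cancel₀ ht0.ne']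
    rw [hIoo, lintegral_Ioo_affine (inv_pos.mpr ht0) _ (by fun_prop),
      ← lintegral_const_mul _ (by fun_prop : Measurable fun u : ℝ =>
        ENNReal.ofReal (((t⁻¹ * u + 0) ^ (a-1) * (1-(t⁻¹ * u + 0)) ^ (b-1))
          * (t ^ (a-1) * (1-t) ^ (a'-1)) * (1 - (t⁻¹ * u + 0)*t) ^ (-b)))]
    refine setLIntegral_congr_fun measurableSet_Ioo (fun u hu => ?_)
    obtain ⟨hu0, hut⟩ := hu
    rw [← ENNReal.ofReal_mul (by positivity)]
    congr 1
    have e2 : 1 - (t⁻¹ * u + 0) = t⁻¹ * (t - u) := by field_simp; ring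
    have e5 : 1 - (t⁻¹ * u + 0) * t = 1 - u := by field_simp; ring
    have e0 : (t⁻¹ * u + 0) = t⁻¹ * u := by ring
    rw [e2, e5, e0, Real.mul_rpow (by positivity) hu0.le,
      Real.mul_rpow (by positivity) (by linarith : (0:ℝ) ≤ t - u),
      Real.inv_rpow ht0.le, Real.inv_rpow ht0.le, ← Real.rpow_neg ht0.le,
      ← Real.rpow_neg ht0.le]
    have hT : (t:ℝ)⁻¹ * (t ^ (-(a-1)) * (t ^ (-(b-1)) * t ^ (a-1))) = t ^ (-b) := by
      rw [show (t:ℝ)⁻¹ = t ^ (-1:ℝ) by rw [Real.rpow_neg_one],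
        ← Real.rpow_add ht0, ← Real.rpow_add ht0, ← Real.rpow_add ht0]
      ring_nf
    simp only [hG]
    linear_combination (u ^ (a-1) * (t-u) ^ (b-1) * (1-t) ^ (a'-1) * (1-u) ^ (-b)) * hT
  -- Step 2 : swap the order of integration
  have measG : Measurable fun z : ℝ × ℝ => ENNReal.ofReal (G z.2 z.1) := by
    simp only [hG]; fun_prop
  have step2 : ∫⁻ t in Ioo (0:ℝ) 1, ∫⁻ u in Ioo 0 t, ENNReal.ofReal (G u t)
      = ∫⁻ u in Ioo (0:ℝ) 1, ∫⁻ t in Ioo u 1, ENNReal.ofReal (G u t) := by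
    set H : ℝ × ℝ → ENNReal := fun z =>
      if z.2 < z.1 then ENNReal.ofReal (G z.2 z.1) else 0 with hH
    have measH : Measurable H :=
      Measurable.ite (measurableSet_lt measurable_snd measurable_fst) measG measurable_const
    have left : ∀ t ∈ Ioo (0:ℝ) 1,
        ∫⁻ u in Ioo 0 t, ENNReal.ofReal (G u t) = ∫⁻ u in Ioo (0:ℝ) 1, H (t, u) := by
      intro t ht
      have h1 : ∀ u : ℝ, H (t, u) = (Iio t).indicator (fun u => ENNReal.ofReal (G u t)) u := by
        intro u
        by_cases hc : u < t <;> simp [hH, Set.indicator_apply, mem_Iio, hc]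
      simp_rw [h1]
      have hset : Iio t ∩ Ioo (0:ℝ) 1 = Ioo (0:ℝ) t := by
        ext v
        simp only [mem_inter_iff, mem_Iio, mem_Ioo]
        constructor
        · rintro ⟨h2, h3, h4⟩; exact ⟨h3, h2⟩
        · rintro ⟨h2, h3⟩; exact ⟨h3, h2, by linarith [ht.2]⟩
      rw [lintegral_indicator measurableSet_Iio, Measure.restrict_restrict measurableSet_Iio,
        hset]
    have right : ∀ u ∈ Ioo (0:ℝ) 1,
        ∫⁻ t in Ioo u 1, ENNReal.ofReal (G u t) = ∫⁻ t in Ioo (0:ℝ) 1, H (t, u) := by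
      intro u hu
      have h1 : ∀ t : ℝ, H (t, u) = (Ioi u).indicator (fun t => ENNReal.ofReal (G u t)) t := by
        intro t
        by_cases hc : u < t <;> simp [hH, Set.indicator_apply, mem_Ioi, hc]
      simp_rw [h1]
      have hset : Ioi u ∩ Ioo (0:ℝ) 1 = Ioo u 1 := by
        ext v
        simp only [mem_inter_iff, mem_Ioi, mem_Ioo]
        constructor
        · rintro ⟨h2, h3, h4⟩; exact ⟨h2, h4⟩
        · rintro ⟨h2, h3⟩; exact ⟨h2, by linarith [hu.1], h3⟩
      rw [lintegral_indicator measurableSet_Ioi, Measure.restrict_restrict measurableSet_Ioi,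
        hset]
    rw [setLIntegral_congr_fun measurableSet_Ioo (left),
      lintegral_lintegral_swap (f := fun t u => H (t, u)) measH.aemeasurable]
    exact (setLIntegral_congr_fun measurableSet_Ioo (right)).symm
  -- Step 3 : substitution t = (1-u) * s + u in the inner integral
  have step3 : ∫⁻ u in Ioo (0:ℝ) 1, ∫⁻ t in Ioo u 1, ENNReal.ofReal (G u t)
      = ∫⁻ u in Ioo (0:ℝ) 1, ∫⁻ s in Ioo (0:ℝ) 1, ENNReal.ofReal (K u s) := by
    refine setLIntegral_congr_fun measurableSet_Ioo (fun u hu => ?_)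
    obtain ⟨hu0, hu1⟩ := hu
    have h1u : (0:ℝ) < 1 - u := by linarith
    have hIoo : Ioo u 1 = Ioo ((1-u) * 0 + u) ((1-u) * 1 + u) := by norm_num
    rw [hIoo, lintegral_Ioo_affine h1u _ (by simp only [hG]; fun_prop),
      ← lintegral_const_mul _ (by simp only [hG]; fun_prop : Measurable fun s : ℝ =>
        ENNReal.ofReal (G u ((1-u) * s + u)))]
    refine setLIntegral_congr_fun measurableSet_Ioo (fun s hs => ?_)
    obtain ⟨hs0, hs1⟩ := hs
    have h1s : (0:ℝ) < 1 - s := by linarith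
    rw [← ENNReal.ofReal_mul h1u.le]
    congr 1
    simp only [hG, hK]
    have e1 : 1 - ((1-u) * s + u) = (1-u) * (1-s) := by ring
    have e2 : ((1-u) * s + u) - u = (1-u) * s := by ring
    have e3 : ((1-u) * s + u) = 1 - (1-u)*(1-s) := by ring
    rw [e1, e2, e3, Real.mul_rpow h1u.le h1s.le, Real.mul_rpow h1u.le hs0.le]
    have hT : (1-u) * ((1-u) ^ (b-1) * (1-u) ^ (-b)) = 1 := by
      rw [← Real.rpow_add h1u, show b-1 + -b = (-1:ℝ) by ring, Real.rpow_neg_one]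
      field_simp
    linear_combination ((1 - (1-u)*(1-s)) ^ (-b) * (1-u) ^ (a'-1) * (1-s) ^ (a'-1)
      * u ^ (a-1) * s ^ (b-1)) * hT
  -- Step 4 : reflections u ↦ 1-u, s ↦ 1-s
  have step4 : ∫⁻ u in Ioo (0:ℝ) 1, ∫⁻ s in Ioo (0:ℝ) 1, ENNReal.ofReal (K u s)
      = ∫⁻ t in Ioo (0:ℝ) 1, ∫⁻ x in Ioo (0:ℝ) 1,
        ENNReal.ofReal ((x ^ (a'-1) * (1-x) ^ (b-1)) * (t ^ (a'-1) * (1-t) ^ (a-1))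
          * (1 - x*t) ^ (-b)) := by
    have inner : ∀ u : ℝ, ∫⁻ s in Ioo (0:ℝ) 1, ENNReal.ofReal (K u s)
        = ∫⁻ s in Ioo (0:ℝ) 1, ENNReal.ofReal
            (u ^ (a-1) * (1-u) ^ (a'-1) * (1-s) ^ (b-1) * s ^ (a'-1)
              * (1 - (1-u)*s) ^ (-b)) := by
      intro u
      rw [← lintegral_Ioo01_reflect (fun s => ENNReal.ofReal (K u s))
        (by simp only [hK]; fun_prop)]
      refine setLIntegral_congr_fun measurableSet_Ioo (fun s hs => ?_)
      simp only [hK]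
      congr 2
      · ring_nf
      · ring_nf
    simp_rw [inner]
    have measΦ : Measurable fun u : ℝ => ∫⁻ s in Ioo (0:ℝ) 1, ENNReal.ofReal
        (u ^ (a-1) * (1-u) ^ (a'-1) * (1-s) ^ (b-1) * s ^ (a'-1)
          * (1 - (1-u)*s) ^ (-b)) := by
      have hm : Measurable fun z : ℝ × ℝ => ENNReal.ofReal
          (z.1 ^ (a-1) * (1-z.1) ^ (a'-1) * (1-z.2) ^ (b-1) * z.2 ^ (a'-1)
            * (1 - (1-z.1)*z.2) ^ (-b)) := by fun_prop
      exact Measurable.lintegral_prod_right (f := fun u s => ENNReal.ofReal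
        (u ^ (a-1) * (1-u) ^ (a'-1) * (1-s) ^ (b-1) * s ^ (a'-1)
          * (1 - (1-u)*s) ^ (-b))) hm
    rw [← lintegral_Ioo01_reflect (fun u => ∫⁻ s in Ioo (0:ℝ) 1, ENNReal.ofReal
        (u ^ (a-1) * (1-u) ^ (a'-1) * (1-s) ^ (b-1) * s ^ (a'-1) * (1 - (1-u)*s) ^ (-b)))
      measΦ]
    refine setLIntegral_congr_fun measurableSet_Ioo (fun u hu => ?_)
    refine setLIntegral_congr_fun measurableSet_Ioo (fun s hs => ?_)
    congr 1
    ring_nf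
  rw [step1, step2, step3, step4]



lemma expandL {p q r w b : ℝ} (hp : 0 < p) (hq : 0 < q) (hr : 0 < r) (hw : 0 < w)
    (hb : 0 < b) :
    ∫⁻ t in Ioo (0:ℝ) 1, ∫⁻ x in Ioo (0:ℝ) 1,
      ENNReal.ofReal ((x ^ (p-1) * (1-x) ^ (q-1)) * (t ^ (r-1) * (1-t) ^ (w-1))
        * (1 - x*t) ^ (-b))
    = ∑' n : ℕ, ENNReal.ofReal (poch b n / (n.factorial : ℝ))
        * ENNReal.ofReal (Real.Gamma (p+n) * Real.Gamma q / Real.Gamma (p+n+q))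
        * ENNReal.ofReal (Real.Gamma (r+n) * Real.Gamma w / Real.Gamma (r+n+w)) := by
  have hinner : ∀ t ∈ Ioo (0:ℝ) 1,
      (∫⁻ x in Ioo (0:ℝ) 1,
        ENNReal.ofReal ((x ^ (p-1) * (1-x) ^ (q-1)) * (t ^ (r-1) * (1-t) ^ (w-1))
          * (1 - x*t) ^ (-b)))
      = ∑' n : ℕ, ENNReal.ofReal (poch b n / (n.factorial : ℝ) * t ^ n
            * (t ^ (r-1) * (1-t) ^ (w-1)))
          * ENNReal.ofReal (Real.Gamma (p+n) * Real.Gamma q / Real.Gamma (p+n+q)) := by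
    intro t ht
    obtain ⟨ht0, ht1⟩ := ht
    have step1 : ∀ x ∈ Ioo (0:ℝ) 1,
        ENNReal.ofReal ((x ^ (p-1) * (1-x) ^ (q-1)) * (t ^ (r-1) * (1-t) ^ (w-1))
          * (1 - x*t) ^ (-b))
        = ∑' n : ℕ, ENNReal.ofReal (poch b n / (n.factorial : ℝ) * t ^ n
            * (t ^ (r-1) * (1-t) ^ (w-1)) * (x ^ (p + n - 1) * (1-x) ^ (q-1))) := by
      intro x hx
      obtain ⟨hx0, hx1⟩ := hx
      have hxt : x * t < 1 := by nlinarith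
      have hxt0 : 0 ≤ x * t := by positivity
      rw [ENNReal.ofReal_mul (by
        have h2 : (0:ℝ) ≤ 1 - x := by linarith
        have h3 : (0:ℝ) ≤ 1 - t := by linarith
        positivity), ← binom_tsum hb hxt0 hxt, ← ENNReal.tsum_mul_left]
      refine tsum_congr fun n => ?_
      rw [← ENNReal.ofReal_mul (by
        have h2 : (0:ℝ) ≤ 1 - x := by linarith
        have h3 : (0:ℝ) ≤ 1 - t := by linarith
        positivity)]
      congr 1
      have hxn : x ^ (p + n - 1) = x ^ (p - 1) * x ^ (n:ℕ) := by
        rw [← Real.rpow_natCast x n, ← Real.rpow_add hx0]; ring_nf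
      rw [hxn, mul_pow]
      ring
    rw [setLIntegral_congr_fun measurableSet_Ioo (step1),
      lintegral_tsum (fun n => (show Measurable fun x : ℝ =>
        ENNReal.ofReal (poch b n / (n.factorial : ℝ) * t ^ n
          * (t ^ (r-1) * (1-t) ^ (w-1)) * (x ^ (p + n - 1) * (1-x) ^ (q-1)))
        by fun_prop).aemeasurable)]
    refine tsum_congr fun n => ?_
    have hc : (0:ℝ) ≤ poch b n / (n.factorial : ℝ) * t ^ n * (t ^ (r-1) * (1-t) ^ (w-1)) := by
      have h1 : (0:ℝ) ≤ 1 - t := by linarith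
      have h2 := (poch_pos hb n).le
      positivity
    have : ∀ x : ℝ, ENNReal.ofReal (poch b n / (n.factorial : ℝ) * t ^ n
            * (t ^ (r-1) * (1-t) ^ (w-1)) * (x ^ (p + n - 1) * (1-x) ^ (q-1)))
        = ENNReal.ofReal (poch b n / (n.factorial : ℝ) * t ^ n * (t ^ (r-1) * (1-t) ^ (w-1)))
          * ENNReal.ofReal (x ^ (p + n - 1) * (1-x) ^ (q-1)) := fun x => by
      rw [← ENNReal.ofReal_mul hc]
    simp_rw [this]
    rw [lintegral_const_mul _ (by fun_prop : Measurable fun x : ℝ =>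
      ENNReal.ofReal (x ^ (p + n - 1) * (1-x) ^ (q-1)))]
    congr 1
    have := betaL (p := p + n) (q := q) (by positivity) hq
    convert this using 3 <;> ring
  rw [setLIntegral_congr_fun measurableSet_Ioo (hinner),
    lintegral_tsum (fun n => by fun_prop)]
  refine tsum_congr fun n => ?_
  have hstep : ∀ t ∈ Ioo (0:ℝ) 1,
      ENNReal.ofReal (poch b n / (n.factorial : ℝ) * t ^ n * (t ^ (r-1) * (1-t) ^ (w-1)))
        * ENNReal.ofReal (Real.Gamma (p+n) * Real.Gamma q / Real.Gamma (p+n+q))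
      = (ENNReal.ofReal (poch b n / (n.factorial : ℝ))
          * ENNReal.ofReal (Real.Gamma (p+n) * Real.Gamma q / Real.Gamma (p+n+q)))
        * ENNReal.ofReal (t ^ (r + n - 1) * (1-t) ^ (w-1)) := by
    intro t ht
    obtain ⟨ht0, ht1⟩ := ht
    have htn : t ^ (r + n - 1) = t ^ (r - 1) * t ^ (n:ℕ) := by
      rw [← Real.rpow_natCast t n, ← Real.rpow_add ht0]; ring_nf
    have h1 : (0:ℝ) ≤ 1 - t := by linarith
    have h2 := (poch_pos hb n).le
    have hA : (0:ℝ) ≤ poch b n / (n.factorial : ℝ) * t ^ n * (t ^ (r-1) * (1-t) ^ (w-1)) := by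
      positivity
    have hB : (0:ℝ) ≤ poch b n / (n.factorial : ℝ) := by positivity
    have hC : (0:ℝ) ≤ poch b n / (n.factorial : ℝ)
        * (Real.Gamma (p+n) * Real.Gamma q / Real.Gamma (p+n+q)) := by positivity
    rw [← ENNReal.ofReal_mul hA, ← ENNReal.ofReal_mul hB, ← ENNReal.ofReal_mul hC]
    congr 1
    rw [htn]
    ring
  rw [setLIntegral_congr_fun measurableSet_Ioo (hstep),
    lintegral_const_mul _ (by fun_prop : Measurable fun t : ℝ =>
      ENNReal.ofReal (t ^ (r + n - 1) * (1-t) ^ (w-1)))]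
  have := betaL (p := r + n) (q := w) (by positivity) hw
  rw [show ∫⁻ t in Ioo (0:ℝ) 1, ENNReal.ofReal (t ^ (r + n - 1) * (1-t) ^ (w-1))
      = ENNReal.ofReal (Real.Gamma (r+n) * Real.Gamma w / Real.Gamma (r+n+w)) by
    convert this using 3 <;> ring]


lemma tsum_eq_toReal {f : ℕ → ℝ} (hf : ∀ n, 0 ≤ f n) :
    ∑' n, f n = (∑' n, ENNReal.ofReal (f n)).toReal := by
  by_cases h : Summable f
  · rw [← ENNReal.ofReal_tsum_of_nonneg hf h, ENNReal.toReal_ofReal (tsum_nonneg hf)]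
  · rw [tsum_eq_zero_of_not_summable h]
    have htop : ∑' n, ENNReal.ofReal (f n) = ⊤ := by
      by_contra hc
      exact h ((ENNReal.summable_toReal hc).congr fun n => ENNReal.toReal_ofReal (hf n))
    simp [htop]

end Aux

theorem bh_constant_symmetric (a a' b : ℝ) (ha : 0 < a) (ha' : 0 < a') (hb : 0 < b) :
    F32one a a b (a + b) (a + a') / (Real.Gamma a' * Real.Gamma (a + b)) =
      F32one a' a' b (a' + b) (a + a') / (Real.Gamma a * Real.Gamma (a' + b)) := by
  classical
  have hab : (0:ℝ) < a + b := by linarith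
  have ha'b : (0:ℝ) < a' + b := by linarith
  have haa' : (0:ℝ) < a + a' := by linarith
  have Ga := Real.Gamma_pos_of_pos ha
  have Ga' := Real.Gamma_pos_of_pos ha'
  have Gb := Real.Gamma_pos_of_pos hb
  have Gab := Real.Gamma_pos_of_pos hab
  have Ga'b := Real.Gamma_pos_of_pos ha'b
  have Gaa' := Real.Gamma_pos_of_pos haa'
  set K : ℝ := Real.Gamma a ^ 2 * Real.Gamma b * Real.Gamma a' ^ 2 / Real.Gamma (a + a')
    with hKdef
  have hK : 0 < K := by rw [hKdef]; positivity
  set α : ℕ → ℝ := fun n => poch b n / (n.factorial : ℝ)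
      * (Real.Gamma (a + n) * Real.Gamma b / Real.Gamma (a + n + b))
      * (Real.Gamma (a + n) * Real.Gamma a' / Real.Gamma (a + n + a')) with hα
  set β : ℕ → ℝ := fun n => poch b n / (n.factorial : ℝ)
      * (Real.Gamma (a' + n) * Real.Gamma b / Real.Gamma (a' + n + b))
      * (Real.Gamma (a' + n) * Real.Gamma a / Real.Gamma (a' + n + a)) with hβ
  have hgan : ∀ n : ℕ, (0:ℝ) < Real.Gamma (a + n) := fun n =>
    Real.Gamma_pos_of_pos (by have : (0:ℝ) ≤ n := Nat.cast_nonneg n; linarith)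
  have hga'n : ∀ n : ℕ, (0:ℝ) < Real.Gamma (a' + n) := fun n =>
    Real.Gamma_pos_of_pos (by have : (0:ℝ) ≤ n := Nat.cast_nonneg n; linarith)
  have hganb : ∀ n : ℕ, (0:ℝ) < Real.Gamma (a + n + b) := fun n =>
    Real.Gamma_pos_of_pos (by have : (0:ℝ) ≤ n := Nat.cast_nonneg n; linarith)
  have hgana' : ∀ n : ℕ, (0:ℝ) < Real.Gamma (a + n + a') := fun n =>
    Real.Gamma_pos_of_pos (by have : (0:ℝ) ≤ n := Nat.cast_nonneg n; linarith)
  have hga'nb : ∀ n : ℕ, (0:ℝ) < Real.Gamma (a' + n + b) := fun n =>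
    Real.Gamma_pos_of_pos (by have : (0:ℝ) ≤ n := Nat.cast_nonneg n; linarith)
  have hga'na : ∀ n : ℕ, (0:ℝ) < Real.Gamma (a' + n + a) := fun n =>
    Real.Gamma_pos_of_pos (by have : (0:ℝ) ≤ n := Nat.cast_nonneg n; linarith)
  have claim1 : F32one a a b (a + b) (a + a') / (Real.Gamma a' * Real.Gamma (a + b)) * K
      = ∑' n : ℕ, α n := by
    rw [F32one, ← tsum_div_const, ← tsum_mul_right]
    refine tsum_congr fun n => ?_
    have e1 : Real.Gamma (a + n) = poch a n * Real.Gamma a := Gamma_add_nat ha n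
    have e2 : Real.Gamma (a + n + b) = poch (a+b) n * Real.Gamma (a+b) := by
      rw [show a + (n:ℝ) + b = (a+b) + n by ring]; exact Gamma_add_nat hab n
    have e3 : Real.Gamma (a + n + a') = poch (a+a') n * Real.Gamma (a+a') := by
      rw [show a + (n:ℝ) + a' = (a+a') + n by ring]; exact Gamma_add_nat haa' n
    have p1 := poch_pos ha n
    have p2 := poch_pos hb n
    have p3 := poch_pos hab n
    have p4 := poch_pos haa' n
    have pf : (0:ℝ) < (n.factorial : ℝ) := by positivity
    rw [hα]
    simp only []
    rw [e1, e2, e3, hKdef]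
    field_simp
  have claim2 : F32one a' a' b (a' + b) (a + a') / (Real.Gamma a * Real.Gamma (a' + b)) * K
      = ∑' n : ℕ, β n := by
    rw [F32one, ← tsum_div_const, ← tsum_mul_right]
    refine tsum_congr fun n => ?_
    have e1 : Real.Gamma (a' + n) = poch a' n * Real.Gamma a' := Gamma_add_nat ha' n
    have e2 : Real.Gamma (a' + n + b) = poch (a'+b) n * Real.Gamma (a'+b) := by
      rw [show a' + (n:ℝ) + b = (a'+b) + n by ring]; exact Gamma_add_nat ha'b n
    have e3 : Real.Gamma (a' + n + a) = poch (a+a') n * Real.Gamma (a+a') := by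
      rw [show a' + (n:ℝ) + a = (a+a') + n by ring]; exact Gamma_add_nat haa' n
    have p1 := poch_pos ha' n
    have p2 := poch_pos hb n
    have p3 := poch_pos ha'b n
    have p4 := poch_pos haa' n
    have pf : (0:ℝ) < (n.factorial : ℝ) := by positivity
    rw [hβ]
    simp only []
    rw [e1, e2, e3, hKdef]
    field_simp
  have hαnn : ∀ n : ℕ, 0 ≤ α n := fun n => by
    rw [hα]
    have p2 := (poch_pos hb n).le
    have h1 := (hgan n).le
    have h2 := (hganb n)
    have h3 := (hgana' n)
    positivity
  have hβnn : ∀ n : ℕ, 0 ≤ β n := fun n => by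
    rw [hβ]
    have p2 := (poch_pos hb n).le
    have h1 := (hga'n n).le
    have h2 := (hga'nb n)
    have h3 := (hga'na n)
    positivity
  have claim3 : ∑' n : ℕ, α n = ∑' n : ℕ, β n := by
    rw [tsum_eq_toReal hαnn, tsum_eq_toReal hβnn]
    congr 1
    have lhs_eq : ∑' n : ℕ, ENNReal.ofReal (α n)
        = ∑' n : ℕ, ENNReal.ofReal (poch b n / (n.factorial : ℝ))
            * ENNReal.ofReal (Real.Gamma (a+n) * Real.Gamma b / Real.Gamma (a+n+b))
            * ENNReal.ofReal (Real.Gamma (a+n) * Real.Gamma a' / Real.Gamma (a+n+a')) := by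
      refine tsum_congr fun n => ?_
      rw [hα]
      simp only []
      rw [ENNReal.ofReal_mul (by
        have p2 := (poch_pos hb n).le
        have h1 := (hgan n).le
        have h2 := (hganb n)
        positivity), ENNReal.ofReal_mul (div_nonneg (poch_pos hb n).le (by positivity))]
    have rhs_eq : ∑' n : ℕ, ENNReal.ofReal (β n)
        = ∑' n : ℕ, ENNReal.ofReal (poch b n / (n.factorial : ℝ))
            * ENNReal.ofReal (Real.Gamma (a'+n) * Real.Gamma b / Real.Gamma (a'+n+b))
            * ENNReal.ofReal (Real.Gamma (a'+n) * Real.Gamma a / Real.Gamma (a'+n+a)) := by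
      refine tsum_congr fun n => ?_
      rw [hβ]
      simp only []
      rw [ENNReal.ofReal_mul (by
        have p2 := (poch_pos hb n).le
        have h1 := (hga'n n).le
        have h2 := (hga'nb n)
        positivity), ENNReal.ofReal_mul (div_nonneg (poch_pos hb n).le (by positivity))]
    rw [lhs_eq, rhs_eq, ← expandL ha hb ha ha' hb, ← expandL ha' hb ha' ha hb,
      substL ha ha' hb]
  have final : F32one a a b (a + b) (a + a') / (Real.Gamma a' * Real.Gamma (a + b)) * K
      = F32one a' a' b (a' + b) (a + a') / (Real.Gamma a * Real.Gamma (a' + b)) * K := by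
    rw [claim1, claim2, claim3]
  exact mul_right_cancel₀ hK.ne' final
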